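/- arXiv:2205.13077 — 8 statements merged into one kernel-verified Lean document; each statement's English description precedes it below -/
import Mathlib

section
/- Let (S, F) be an independence system on a finite set S with a sequential order, in which every singleton is feasible. If two distinct objects x, y ∈ S satisfy rank(x) = rank(y), then x does not rely on y and y does not rely on x. -/
lemma relies_rank_lt {S : Type*} [Fintype S] [DecidableEq S]
    (F : Finset S → Prop) (I : S → ℕ) (rank : S → ℕ)
    (hrank : ∀ x : S, IsGreatest
      {n : ℕ | ∃ E : Finset S, F E ∧ x ∈ E ∧ (∀ y ∈ E, I y ≤ I x) ∧ E.card = n} (rank x))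
    (a b : S) (hlt : I a < I b)
    (hins : ∀ E : Finset S, F E → a ∈ E → (∀ z ∈ E, I z ≤ I a) → F (insert b E)) :
    rank a < rank b := by
  obtain ⟨⟨E, hFE, haE, hle, hcard⟩, _⟩ := hrank a
  have hbE : b ∉ E := fun hb => absurd (hle b hb) (not_le.mpr hlt)
  have : rank a + 1 ∈ {n : ℕ | ∃ E : Finset S, F E ∧ b ∈ E ∧ (∀ y ∈ E, I y ≤ I b) ∧ E.card = n} := by
    refine ⟨insert b E, hins E hFE haE hle, Finset.mem_insert_self _ _, ?_, ?_⟩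
    · intro z hz
      rcases Finset.mem_insert.mp hz with h | h
      · simp [h]
      · exact le_of_lt (lt_of_le_of_lt (hle z h) hlt)
    · rw [Finset.card_insert_of_notMem hbE, hcard]
  have := (hrank b).2 this
  omega

/-- In an independence system with a sequential order in which every
singleton is feasible, two distinct objects with equal rank cannot rely on each other. -/
theorem stmt_0 {S : Type*} [Fintype S] [DecidableEq S]
    (F : Finset S → Prop)
    (hempty : F ∅)
    (hhered : ∀ E E' : Finset S, E' ⊆ E → F E → F E')
    (hsingle : ∀ x : S, F {x})
    (I : S → ℕ) (hI : Function.Injective I)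
    (rank : S → ℕ)
    (hrank : ∀ x : S, IsGreatest
      {n : ℕ | ∃ E : Finset S, F E ∧ x ∈ E ∧ (∀ y ∈ E, I y ≤ I x) ∧ E.card = n} (rank x))
    (relies : S → S → Prop)
    -- `relies y x` means: y relies on x
    (hrelies : ∀ y x : S, relies y x ↔
      (I x < I y ∧ ∀ E : Finset S, F E → x ∈ E → (∀ z ∈ E, I z ≤ I x) → F (insert y E)))
    (x y : S) (hxy : x ≠ y) (hr : rank x = rank y) :
    ¬ relies x y ∧ ¬ relies y x := by
  constructor
  · intro h
    obtain ⟨hlt, hins⟩ := (hrelies x y).mp h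
    have := relies_rank_lt F I rank hrank y x hlt hins
    omega
  · intro h
    obtain ⟨hlt, hins⟩ := (hrelies y x).mp h
    have := relies_rank_lt F I rank hrank x y hlt hins
    omega
end

section
/- Let (S, F) be an independence system on a finite set S with a sequential order, in which every singleton is feasible. If y relies on x, then rank(y) ≥ rank(x) + 1. In particular, rank is strictly increasing along every edge of the dependence graph. -/
/-- In an independence system with a sequential order in which every
singleton is feasible, if y relies on x then rank(y) ≥ rank(x) + 1. -/
theorem stmt_1 {S : Type*} [Fintype S] [DecidableEq S]
    (F : Finset S → Prop)
    (hempty : F ∅)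
    (hhered : ∀ E E' : Finset S, E' ⊆ E → F E → F E')
    (hsingle : ∀ x : S, F {x})
    (I : S → ℕ) (hI : Function.Injective I)
    (rank : S → ℕ)
    (hrank : ∀ x : S, IsGreatest
      {n : ℕ | ∃ E : Finset S, F E ∧ x ∈ E ∧ (∀ y ∈ E, I y ≤ I x) ∧ E.card = n} (rank x))
    (relies : S → S → Prop)
    -- `relies y x` means: y relies on x
    (hrelies : ∀ y x : S, relies y x ↔
      (I x < I y ∧ ∀ E : Finset S, F E → x ∈ E → (∀ z ∈ E, I z ≤ I x) → F (insert y E)))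
    (x y : S) (h : relies y x) :
    rank x + 1 ≤ rank y := by
  rw [hrelies] at h
  obtain ⟨hxy, hins⟩ := h
  obtain ⟨E, hFE, hxE, hle, hcard⟩ := (hrank x).1
  have hyE : y ∉ E := fun hy => absurd (hle y hy) (not_le.mpr hxy)
  exact (hrank y).2 ⟨insert y E, hins E hFE hxE hle, Finset.mem_insert_self y E,
    fun z hz => by
      rcases Finset.mem_insert.mp hz with rfl | hz
      · exact le_rfl
      · exact (hle z hz).trans hxy.le,
    by rw [Finset.card_insert_of_notMem hyE, hcard]⟩
end

section
/- Consider a finite set of activities. (i) Every activity that overlaps the activity with the minimum end time has rank 1. (ii) For every k ≥ 1: if the set S' of activities with rank greater than k is nonempty and A_j is the activity in S' with the minimum end time, then every activity in S' that overlaps A_j has rank exactly k + 1. -/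
/-- (i) Every activity overlapping the minimum-end-time activity has
rank 1.  (ii) For k ≥ 1, if A_j is the minimum-end-time activity among those of rank
greater than k, then every activity of rank greater than k overlapping A_j has rank
exactly k + 1. -/
theorem stmt_3 {n : ℕ} (hn : 0 < n) (s e : Fin n → ℝ)
    (hse : ∀ i, s i < e i) (hmono : StrictMono e)
    (Compat : Fin n → Fin n → Prop)
    (hCompat : ∀ i j, Compat i j ↔ ((i < j ∧ e i ≤ s j) ∨ (j < i ∧ e j ≤ s i)))
    (rank : Fin n → ℕ)
    (hrank : ∀ x, IsGreatest {m : ℕ | ∃ T : Finset (Fin n), x ∈ T ∧ (∀ i ∈ T, i ≤ x) ∧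
        (∀ i ∈ T, ∀ j ∈ T, i ≠ j → Compat i j) ∧ T.card = m} (rank x)) :
    -- (i): index ⟨0, hn⟩ is the activity with minimum end time (e is strictly increasing)
    (∀ x : Fin n, ¬ Compat x ⟨0, hn⟩ → rank x = 1) ∧
    -- (ii)
    (∀ k : ℕ, 1 ≤ k → ∀ j : Fin n, k < rank j → (∀ i : Fin n, k < rank i → e j ≤ e i) →
      ∀ i : Fin n, k < rank i → ¬ Compat i j → rank i = k + 1) := by
  have hpos : ∀ x, 1 ≤ rank x := by
    intro x
    obtain ⟨T, hxT, -, -, hcard⟩ := (hrank x).1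
    have := Finset.card_pos.mpr ⟨x, hxT⟩
    omega
  constructor
  · intro x hx
    obtain ⟨T, hxT, hle, hcomp, hcard⟩ := (hrank x).1
    have hsub : T ⊆ {x} := by
      intro i hi
      simp only [Finset.mem_singleton]
      by_contra hne
      have hix : i < x := lt_of_le_of_ne (hle i hi) hne
      have h0i : (⟨0, hn⟩ : Fin n) ≤ i := by
        simp [Fin.le_def]
      have h0x : (⟨0, hn⟩ : Fin n) < x := lt_of_le_of_lt h0i hix
      have h1 : e i ≤ s x := by
        rcases (hCompat i x).1 (hcomp i hi x hxT hne) with ⟨-, h⟩ | ⟨h', -⟩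
        · exact h
        · exact absurd h' (not_lt.2 hix.le)
      have h2 : s x < e ⟨0, hn⟩ := by
        by_contra h
        exact hx ((hCompat x ⟨0, hn⟩).2 (Or.inr ⟨h0x, not_lt.1 h⟩))
      have h3 : e ⟨0, hn⟩ ≤ e i := hmono.monotone h0i
      linarith
    have hc1 := Finset.card_le_card hsub
    simp only [Finset.card_singleton] at hc1
    have := hpos x
    omega
  · intro k hk j hj hjmin i hi hncomp
    by_contra hne
    have h2 : k + 2 ≤ rank i := by omega
    obtain ⟨T, hiT, hle, hcomp, hcard⟩ := (hrank i).1
    have hcard' : k + 1 ≤ (T.erase i).card := by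
      rw [Finset.card_erase_of_mem hiT]; omega
    have hne' : (T.erase i).Nonempty := Finset.card_pos.1 (by omega)
    set i' := (T.erase i).max' hne' with hi'
    have hi'T' : i' ∈ T.erase i := Finset.max'_mem _ _
    have hi'T : i' ∈ T := Finset.mem_of_mem_erase hi'T'
    have hi'ne : i' ≠ i := Finset.ne_of_mem_erase hi'T'
    have hi'lt : i' < i := lt_of_le_of_ne (hle i' hi'T) hi'ne
    have hcompat' : e i' ≤ s i := by
      rcases (hCompat i' i).1 (hcomp i' hi'T i hiT hi'ne) with ⟨-, h⟩ | ⟨h', -⟩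
      · exact h
      · exact absurd h' (not_lt.2 hi'lt.le)
    have hranki' : k < rank i' := by
      have hmem : (T.erase i).card ∈ {m : ℕ | ∃ T : Finset (Fin n), i' ∈ T ∧
          (∀ a ∈ T, a ≤ i') ∧ (∀ a ∈ T, ∀ b ∈ T, a ≠ b → Compat a b) ∧ T.card = m} :=
        ⟨T.erase i, hi'T', fun a ha => Finset.le_max' _ a ha,
          fun a ha b hb hab =>
            hcomp a (Finset.mem_of_mem_erase ha) b (Finset.mem_of_mem_erase hb) hab, rfl⟩
      have := (hrank i').2 hmem
      omega
    have hej : e j ≤ e i' := hjmin i' hranki'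
    have hCij : ∀ h, ¬ ((i < j ∧ e i ≤ s j) ∨ (j < i ∧ e j ≤ s i)) → False :=
      fun h _ => h
    rcases lt_trichotomy i j with hij | hij | hij
    · have hns : ¬ e i ≤ s j := fun h => hncomp ((hCompat i j).2 (Or.inl ⟨hij, h⟩))
      have hlt : e j < e i := by linarith [hse i]
      exact absurd (hmono.lt_iff_lt.1 hlt) (not_lt.2 hij.le)
    · subst hij
      linarith [hse i]
    · have hns : ¬ e j ≤ s i := fun h => hncomp ((hCompat i j).2 (Or.inr ⟨hij, h⟩))
      linarith
end

section
/- Consider a finite set of activities and an activity A_x such that the set P = {A_i : e_i ≤ s_x} of activities ending no later than A_x starts is nonempty. Let A_p ∈ P be an activity with the maximum start time among P (the pivot activity of A_x). Then rank(A_x) = rank(A_p) + 1. -/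
/-- If the set P of activities ending no later than A_x starts is
nonempty and A_p is an activity of P with maximum start time (the pivot of A_x),
then rank(A_x) = rank(A_p) + 1. -/
theorem stmt_4 {n : ℕ} (s e : Fin n → ℝ)
    (hse : ∀ i, s i < e i) (hmono : StrictMono e)
    (Compat : Fin n → Fin n → Prop)
    (hCompat : ∀ i j, Compat i j ↔ ((i < j ∧ e i ≤ s j) ∨ (j < i ∧ e j ≤ s i)))
    (rank : Fin n → ℕ)
    (hrank : ∀ x, IsGreatest {m : ℕ | ∃ T : Finset (Fin n), x ∈ T ∧ (∀ i ∈ T, i ≤ x) ∧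
        (∀ i ∈ T, ∀ j ∈ T, i ≠ j → Compat i j) ∧ T.card = m} (rank x))
    (x p : Fin n)
    (hp : e p ≤ s x)                              -- p ∈ P, so P is nonempty
    (hpmax : ∀ i : Fin n, e i ≤ s x → s i ≤ s p)  -- p has the maximum start time in P
    : rank x = rank p + 1 := by
  have hsymm : ∀ i j, Compat i j → Compat j i := by
    intro i j h
    rw [hCompat] at h ⊢; tauto
  have hpx : p < x := hmono.lt_iff_lt.mp (lt_of_le_of_lt hp (hse x))
  obtain ⟨⟨T, hxT, hTle, hTc, hTcard⟩, hub⟩ := hrank x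
  obtain ⟨⟨U, hpU, hUle, hUc, hUcard⟩, hub'⟩ := hrank p
  have h1 : rank p + 1 ≤ rank x := by
    have hxU : x ∉ U := fun h => absurd (hUle x h) (not_le.mpr hpx)
    have hcx : ∀ i ∈ U, Compat i x := by
      intro i hi
      have hile : i ≤ p := hUle i hi
      have heis : e i ≤ s x := by
        rcases eq_or_lt_of_le hile with h | h
        · subst h; exact hp
        · have hc := hUc i hi p hpU (ne_of_lt h)
          rcases (hCompat i p).mp hc with ⟨_, h2⟩ | ⟨h2, _⟩
          · exact le_trans h2 (le_of_lt (lt_of_lt_of_le (hse p) hp))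
          · exact absurd h2 (not_lt.mpr (le_of_lt h))
      exact (hCompat i x).mpr (Or.inl ⟨lt_of_le_of_lt hile hpx, heis⟩)
    refine hub ⟨insert x U, Finset.mem_insert_self _ _, ?_, ?_, ?_⟩
    · intro i hi
      rcases Finset.mem_insert.mp hi with h | h
      · exact le_of_eq h
      · exact le_of_lt (lt_of_le_of_lt (hUle i h) hpx)
    · intro i hi j hj hij
      rcases Finset.mem_insert.mp hi with h | h <;> rcases Finset.mem_insert.mp hj with h' | h'
      · exact absurd (h.trans h'.symm) hij
      · subst h; exact hsymm _ _ (hcx j h')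
      · subst h'; exact hcx i h
      · exact hUc i h j h' hij
    · rw [Finset.card_insert_of_notMem hxU, hUcard]
  have h2 : rank x ≤ rank p + 1 := by
    rcases le_or_gt (rank x) 1 with hle | hgt
    · omega
    · set S := T.erase x with hS
      have hScard : S.card = rank x - 1 := by
        rw [hS, Finset.card_erase_of_mem hxT, hTcard]
      have hSx : ∀ i ∈ S, e i ≤ s x ∧ i < x := by
        intro i hi
        obtain ⟨hne, hiT⟩ := Finset.mem_erase.mp hi
        have hlt : i < x := lt_of_le_of_ne (hTle i hiT) hne
        have hc := hTc i hiT x hxT hne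
        rcases (hCompat i x).mp hc with ⟨_, h2⟩ | ⟨h2, _⟩
        · exact ⟨h2, hlt⟩
        · exact absurd h2 (not_lt.mpr (le_of_lt hlt))
      have hNE : S.Nonempty := by
        rw [← Finset.card_pos, hScard]; omega
      set j := S.max' hNE with hj
      have hjS : j ∈ S := S.max'_mem hNE
      have hjsp : s j ≤ s p := hpmax j (hSx j hjS).1
      have hkey : ∀ i ∈ S.erase j, i < p ∧ e i ≤ s p := by
        intro i hi
        obtain ⟨hne, hiS⟩ := Finset.mem_erase.mp hi
        have hilt : i < j := lt_of_le_of_ne (S.le_max' i hiS) hne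
        have hc := hTc i (Finset.mem_of_mem_erase hiS) j (Finset.mem_of_mem_erase hjS) hne
        rcases (hCompat i j).mp hc with ⟨_, h2⟩ | ⟨h2, _⟩
        · have heip : e i ≤ s p := le_trans h2 hjsp
          exact ⟨hmono.lt_iff_lt.mp (lt_of_le_of_lt heip (hse p)), heip⟩
        · exact absurd h2 (not_lt.mpr (le_of_lt hilt))
      have hpnot : p ∉ S.erase j := fun h => absurd (hkey p h).1 (lt_irrefl p)
      have hrp : rank x - 1 ≤ rank p := by
        refine hub' ⟨insert p (S.erase j), Finset.mem_insert_self _ _, ?_, ?_, ?_⟩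
        · intro i hi
          rcases Finset.mem_insert.mp hi with h | h
          · exact le_of_eq h
          · exact le_of_lt (hkey i h).1
        · intro i hi k hk hik
          rcases Finset.mem_insert.mp hi with h | h <;> rcases Finset.mem_insert.mp hk with h' | h'
          · exact absurd (h.trans h'.symm) hik
          · rw [h]
            exact hsymm _ _ ((hCompat k p).mpr (Or.inl (hkey k h')))
          · rw [h']
            exact (hCompat i p).mpr (Or.inl (hkey i h))
          · exact hTc i (Finset.mem_of_mem_erase (Finset.mem_of_mem_erase h))
              k (Finset.mem_of_mem_erase (Finset.mem_of_mem_erase h')) hik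
        · rw [Finset.card_insert_of_notMem hpnot, Finset.card_erase_of_mem hjS, hScard]
          omega
      omega
  omega
end

section
/- Consider a finite set of activities. For an activity A_x, if no activity ends at or before s_x then rank(A_x) = 1; otherwise rank(A_x) = 1 + rank(pivot(A_x)). Consequently, defining the pivot chain of A_x as the sequence A_x, pivot(A_x), pivot(pivot(A_x)), … iterated until reaching an activity with no activity ending at or before its start time, rank(A_x) equals the number of activities on this chain; i.e., the rank of each activity is its depth in the pivot forest in which each activity's parent is its pivot. -/
/-- rank(A_x) = 1 if no activity ends at or before s_x, and otherwise
rank(A_x) = 1 + rank(pivot(A_x)); consequently rank(A_x) equals the depth of A_x in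
the pivot forest (the number of activities on the pivot chain of A_x). -/
theorem stmt_5 {n : ℕ} (s e : Fin n → ℝ)
    (hse : ∀ i, s i < e i) (hmono : StrictMono e)
    (Compat : Fin n → Fin n → Prop)
    (hCompat : ∀ i j, Compat i j ↔ ((i < j ∧ e i ≤ s j) ∨ (j < i ∧ e j ≤ s i)))
    (rank : Fin n → ℕ)
    (hrank : ∀ x, IsGreatest {m : ℕ | ∃ T : Finset (Fin n), x ∈ T ∧ (∀ i ∈ T, i ≤ x) ∧
        (∀ i ∈ T, ∀ j ∈ T, i ≠ j → Compat i j) ∧ T.card = m} (rank x))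
    (pivot : Fin n → Fin n)
    -- whenever some activity ends no later than `s x`, `pivot x` is such an activity
    -- with the maximum start time
    (hpivot : ∀ x : Fin n, (∃ i, e i ≤ s x) →
      e (pivot x) ≤ s x ∧ ∀ i : Fin n, e i ≤ s x → s i ≤ s (pivot x))
    -- `depth x` is the number of activities on the pivot chain of x, i.e. the depth
    -- of x in the pivot forest (each activity's parent is its pivot)
    (depth : Fin n → ℕ)
    (hdepth1 : ∀ x : Fin n, (¬ ∃ i, e i ≤ s x) → depth x = 1)
    (hdepth2 : ∀ x : Fin n, (∃ i, e i ≤ s x) → depth x = depth (pivot x) + 1) :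
    (∀ x : Fin n, (¬ ∃ i, e i ≤ s x) → rank x = 1) ∧
    (∀ x : Fin n, (∃ i, e i ≤ s x) → rank x = 1 + rank (pivot x)) ∧
    (∀ x : Fin n, rank x = depth x) := by
  have hrge1 : ∀ x : Fin n, 1 ≤ rank x := by
    intro x
    apply (hrank x).2
    refine ⟨{x}, Finset.mem_singleton_self x, by simp, by simp, Finset.card_singleton x⟩
  have h1 : ∀ x : Fin n, (¬ ∃ i, e i ≤ s x) → rank x = 1 := by
    intro x hx
    have hle : rank x ≤ 1 := by
      obtain ⟨T, hxT, hTle, hTc, hcard⟩ := (hrank x).1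
      have hsub : T ⊆ {x} := by
        intro i hi
        simp only [Finset.mem_singleton]
        by_contra hne
        have hix : i < x := lt_of_le_of_ne (hTle i hi) hne
        have hc := (hCompat i x).mp (hTc i hi x hxT hne)
        rcases hc with ⟨_, h⟩ | ⟨h, _⟩
        · exact hx ⟨i, h⟩
        · exact absurd h (not_lt.2 (le_of_lt hix))
      calc rank x = T.card := hcard.symm
        _ ≤ ({x} : Finset (Fin n)).card := Finset.card_le_card hsub
        _ = 1 := Finset.card_singleton x
    have := hrge1 x
    omega
  have h2 : ∀ x : Fin n, (∃ i, e i ≤ s x) → rank x = 1 + rank (pivot x) := by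
    intro x hx
    obtain ⟨hpe, hpmax⟩ := hpivot x hx
    set p := pivot x with hp
    have hpx : p < x := hmono.lt_iff_lt.mp (lt_of_le_of_lt hpe (hse x))
    have hge : 1 + rank p ≤ rank x := by
      obtain ⟨T, hpT, hTle, hTc, hcard⟩ := (hrank p).1
      have hxT : x ∉ T := fun h => absurd (hTle x h) (not_le.2 hpx)
      apply (hrank x).2
      refine ⟨insert x T, Finset.mem_insert_self _ _, ?_, ?_, ?_⟩
      · intro i hi
        rcases Finset.mem_insert.mp hi with h | h
        · exact le_of_eq h
        · exact le_of_lt (lt_of_le_of_lt (hTle i h) hpx)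
      · intro i hi j hj hij
        rcases Finset.mem_insert.mp hi with hi' | hi' <;>
          rcases Finset.mem_insert.mp hj with hj' | hj'
        · exact absurd (hi'.trans hj'.symm) hij
        · rw [hCompat]
          right
          rw [hi']
          exact ⟨lt_of_le_of_lt (hTle j hj') hpx,
            le_trans (hmono.monotone (hTle j hj')) hpe⟩
        · rw [hCompat]
          left
          rw [hj']
          exact ⟨lt_of_le_of_lt (hTle i hi') hpx,
            le_trans (hmono.monotone (hTle i hi')) hpe⟩
        · exact hTc i hi' j hj' hij
      · rw [Finset.card_insert_of_notMem hxT, hcard, add_comm]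
    have hle : rank x ≤ 1 + rank p := by
      obtain ⟨T, hxT, hTle, hTc, hcard⟩ := (hrank x).1
      set T' := T.erase x with hT'
      have hcardT' : T'.card = rank x - 1 := by
        rw [hT', Finset.card_erase_of_mem hxT, hcard]
      have hT'prop : ∀ i ∈ T', i < x ∧ e i ≤ s x := by
        intro i hi
        have hne := Finset.ne_of_mem_erase hi
        have hiT := Finset.mem_of_mem_erase hi
        have hix : i < x := lt_of_le_of_ne (hTle i hiT) hne
        have hc := (hCompat i x).mp (hTc i hiT x hxT hne)
        rcases hc with ⟨_, h⟩ | ⟨h, _⟩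
        · exact ⟨hix, h⟩
        · exact absurd h (not_lt.2 (le_of_lt hix))
      rcases T'.eq_empty_or_nonempty with hT'e | hT'e
      · have : T'.card = 0 := by rw [hT'e]; rfl
        have := hrge1 p
        omega
      · obtain ⟨m, hmT', hmmax⟩ := T'.exists_max_image id hT'e
        have hmex : e m ≤ s x := (hT'prop m hmT').2
        have hsm : s m ≤ s p := hpmax m hmex
        -- elements of T'.erase m are < p with e i ≤ s p
        have hkey : ∀ i ∈ T'.erase m, i < p ∧ e i ≤ s p := by
          intro i hi
          have hne := Finset.ne_of_mem_erase hi
          have hiT' := Finset.mem_of_mem_erase hi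
          have him : i < m := lt_of_le_of_ne (hmmax i hiT') hne
          have hc := (hCompat i m).mp
            (hTc i (Finset.mem_of_mem_erase hiT') m (Finset.mem_of_mem_erase hmT') hne)
          rcases hc with ⟨_, h⟩ | ⟨h, _⟩
          · have heisp : e i ≤ s p := le_trans h hsm
            exact ⟨hmono.lt_iff_lt.mp (lt_of_le_of_lt heisp (hse p)), heisp⟩
          · exact absurd h (not_lt.2 (le_of_lt him))
        have hpnotin : p ∉ T'.erase m := fun h => absurd (hkey p h).1 (lt_irrefl p)
        have hrp : T'.card ≤ rank p := by
          have hmem : T'.card ∈ {m : ℕ | ∃ T : Finset (Fin n), p ∈ T ∧ (∀ i ∈ T, i ≤ p) ∧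
              (∀ i ∈ T, ∀ j ∈ T, i ≠ j → Compat i j) ∧ T.card = m} := by
            refine ⟨insert p (T'.erase m), Finset.mem_insert_self _ _, ?_, ?_, ?_⟩
            · intro i hi
              rcases Finset.mem_insert.mp hi with h | h
              · exact le_of_eq h
              · exact le_of_lt (hkey i h).1
            · intro i hi j hj hij
              rcases Finset.mem_insert.mp hi with hi' | hi' <;>
                rcases Finset.mem_insert.mp hj with hj' | hj'
              · exact absurd (hi'.trans hj'.symm) hij
              · rw [hCompat]
                right
                rw [hi']
                exact ⟨(hkey j hj').1, (hkey j hj').2⟩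
              · rw [hCompat]
                left
                rw [hj']
                exact ⟨(hkey i hi').1, (hkey i hi').2⟩
              · exact hTc i (Finset.mem_of_mem_erase (Finset.mem_of_mem_erase hi'))
                  j (Finset.mem_of_mem_erase (Finset.mem_of_mem_erase hj')) hij
            · rw [Finset.card_insert_of_notMem hpnotin,
                Finset.card_erase_of_mem hmT']
              have : 1 ≤ T'.card := Finset.card_pos.mpr ⟨m, hmT'⟩
              omega
          exact (hrank p).2 hmem
        have := hrge1 x
        omega
    omega
  refine ⟨h1, h2, ?_⟩
  have h3 : ∀ k : ℕ, ∀ x : Fin n, x.val = k → rank x = depth x := by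
    intro k
    induction k using Nat.strong_induction_on with
    | _ k ih =>
      intro x hxk
      by_cases hx : ∃ i, e i ≤ s x
      · have hpx : (pivot x) < x :=
          hmono.lt_iff_lt.mp (lt_of_le_of_lt (hpivot x hx).1 (hse x))
        have hlt : (pivot x).val < k := hxk ▸ hpx
        rw [h2 x hx, hdepth2 x hx, ih (pivot x).val hlt (pivot x) rfl]
        omega
      · rw [h1 x hx, hdepth1 x hx]
  exact fun x => h3 x.val x rfl
end

section
/- Let G be a finite simple graph with an injective priority function π : V → ℕ, and let M be the greedy maximal independent set, defined by well-founded recursion on decreasing priority: v ∈ M if and only if every neighbor u of v with π(u) > π(v) satisfies u ∉ M. Consider the round-based parallel process: starting with all vertices undecided, in each round select every undecided vertex whose priority is greater than the priorities of all of its undecided neighbors, and then mark the selected vertices and all their neighbors as decided. Then M is a maximal independent set of G, and the union over all rounds of the selected vertices equals M. -/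
/-- Let M be the greedy MIS (v ∈ M iff no higher-priority neighbor of
v is in M).  Consider the round-based process: in each round select every undecided
vertex whose priority exceeds the priorities of all its undecided neighbors, then
mark the selected vertices and their neighbors as decided.  Then M is a maximal
independent set, and the union over all rounds of the selected vertices equals M. -/
theorem stmt_11 {V : Type*} [Fintype V] (G : SimpleGraph V)
    (π : V → ℕ) (hπ : Function.Injective π)
    (M : Set V)
    (hM : ∀ v : V, v ∈ M ↔ ∀ u : V, G.Adj v u → π v < π u → u ∉ M)
    (selected decided : ℕ → Set V)
    (hdec0 : decided 0 = ∅)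
    (hsel : ∀ r : ℕ, selected r =
      {v : V | v ∉ decided r ∧ ∀ u : V, G.Adj v u → u ∉ decided r → π u < π v})
    (hdec : ∀ r : ℕ, decided (r + 1) =
      decided r ∪ selected r ∪ {u : V | ∃ v ∈ selected r, G.Adj v u}) :
    (∀ v ∈ M, ∀ u ∈ M, ¬ G.Adj v u) ∧
    (∀ v : V, v ∉ M → ∃ u ∈ M, G.Adj v u) ∧
    (⋃ r : ℕ, selected r) = M := by
  classical
  -- decided is monotone
  have hstep : ∀ r, decided r ⊆ decided (r + 1) := by
    intro r
    rw [hdec r]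
    intro x hx
    exact Or.inl (Or.inl hx)
  have hmono : ∀ r s, r ≤ s → decided r ⊆ decided s := by
    intro r s h
    induction h with
    | refl => exact Set.Subset.refl _
    | step h ih => exact ih.trans (hstep _)
  -- M is independent
  have hind : ∀ v ∈ M, ∀ u ∈ M, ¬ G.Adj v u := by
    intro v hv u hu hadj
    have hne : π v ≠ π u := fun h => (G.ne_of_adj hadj) (hπ h)
    rcases lt_or_gt_of_ne hne with h | h
    · exact (hM v).mp hv u hadj h hu
    · exact (hM u).mp hu v hadj.symm h hv
  -- key invariant
  have Q : ∀ r : ℕ, (∀ r' < r, selected r' ⊆ M) ∧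
      (∀ u ∈ decided r, u ∈ M → ∃ r' < r, u ∈ selected r') := by
    intro r
    induction r with
    | zero =>
      refine ⟨fun r' h => absurd h (Nat.not_lt_zero r'), ?_⟩
      rw [hdec0]; intro u hu; exact absurd hu (Set.notMem_empty u)
    | succ r ih =>
      have hselM : selected r ⊆ M := by
        intro v hv
        rw [hsel r] at hv
        obtain ⟨hvnd, hnb⟩ := hv
        rw [hM]
        intro u hadj hlt hu
        by_cases hud : u ∈ decided r
        · obtain ⟨r', hr', hsu⟩ := ih.2 u hud hu
          have hvd : v ∈ decided (r' + 1) := by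
            rw [hdec r']
            exact Or.inr ⟨u, hsu, hadj.symm⟩
          exact hvnd (hmono (r' + 1) r hr' hvd)
        · exact absurd (hnb u hadj hud) (not_lt.mpr hlt.le)
      refine ⟨?_, ?_⟩
      · intro r' h
        rcases Nat.lt_succ_iff_lt_or_eq.mp h with h | rfl
        · exact ih.1 r' h
        · exact hselM
      · intro u hud huM
        rw [hdec r] at hud
        rcases hud with (hud | hus) | ⟨w, hws, hadj⟩
        · obtain ⟨r', h, hs⟩ := ih.2 u hud huM
          exact ⟨r', h.trans (Nat.lt_succ_self r), hs⟩
        · exact ⟨r, Nat.lt_succ_self r, hus⟩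
        · exact absurd hadj (hind w (hselM hws) u huM)
  -- every vertex is eventually decided
  have key : ∀ n : ℕ, ∀ v : V,
      (Finset.univ.filter (fun u => π v < π u)).card < n → ∃ r, v ∈ decided r := by
    intro n
    induction n with
    | zero => intro v h; exact absurd h (Nat.not_lt_zero _)
    | succ n ih =>
      intro v hcard
      have hnb : ∀ u : V, π v < π u → ∃ r, u ∈ decided r := by
        intro u hu
        apply ih
        have hsubset : (Finset.univ.filter (fun w => π u < π w)) ⊆
            (Finset.univ.filter (fun w => π v < π w)) := by
          intro w hw
          simp only [Finset.mem_filter, Finset.mem_univ, true_and] at hw ⊢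
          exact hu.trans hw
        have hss : (Finset.univ.filter (fun w => π u < π w)) ⊂
            (Finset.univ.filter (fun w => π v < π w)) := by
          rw [Finset.ssubset_iff_of_subset hsubset]
          refine ⟨u, ?_, ?_⟩
          · simp only [Finset.mem_filter, Finset.mem_univ, true_and]; exact hu
          · simp only [Finset.mem_filter, Finset.mem_univ, true_and]
            exact lt_irrefl _
        have := Finset.card_lt_card hss
        omega
      choose f hf using hnb
      set g : V → ℕ := fun u => if h : π v < π u then f u h else 0 with hg
      set R : ℕ := Finset.univ.sup g with hR
      have hdecall : ∀ u : V, π v < π u → u ∈ decided R := by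
        intro u hu
        have h1 : u ∈ decided (g u) := by
          simp only [hg, dif_pos hu]
          exact hf u hu
        exact hmono (g u) R (Finset.le_sup (Finset.mem_univ u)) h1
      by_cases hvd : v ∈ decided R
      · exact ⟨R, hvd⟩
      · refine ⟨R + 1, ?_⟩
        rw [hdec R]
        left; right
        rw [hsel R]
        refine ⟨hvd, ?_⟩
        intro u hadj hund
        rcases lt_trichotomy (π u) (π v) with h | h | h
        · exact h
        · exact absurd (hπ h) (G.ne_of_adj hadj).symm
        · exact absurd (hdecall u h) hund
  refine ⟨hind, ?_, ?_⟩
  · -- maximality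
    intro v hv
    have h : ¬ ∀ u : V, G.Adj v u → π v < π u → u ∉ M :=
      fun h => hv ((hM v).mpr h)
    push_neg at h
    obtain ⟨u, hadj, _, hu⟩ := h
    exact ⟨u, hu, hadj⟩
  · -- union equals M
    ext v
    simp only [Set.mem_iUnion]
    constructor
    · rintro ⟨r, hr⟩
      exact (Q (r + 1)).1 r (Nat.lt_succ_self r) hr
    · intro hv
      obtain ⟨r, hr⟩ := key ((Finset.univ.filter (fun u => π v < π u)).card + 1) v
        (Nat.lt_succ_self _)
      obtain ⟨r', _, hs⟩ := (Q r).2 v hr hv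
      exact ⟨r', hs⟩
end

section
/- Let G be a finite simple graph with an injective priority function π : V → ℕ. For a vertex v, define D(v) as the maximum length (number of vertices) of a path u_1, u_2, …, u_k = v in G with strictly decreasing priorities π(u_1) > π(u_2) > ⋯ > π(u_k). In the round-based greedy MIS process — in each round select every undecided vertex whose priority exceeds that of all its undecided neighbors, and mark the selected vertices and their neighbors as decided — every vertex v is decided (selected or removed) no later than round D(v). Consequently the process terminates after at most max_v D(v) rounds, the length of the longest monotone-priority path in G. -/
/-- With D(v) the maximum number of vertices on a path ending at v
with strictly decreasing priorities, every vertex v is decided no later than round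
D(v) in the round-based greedy MIS process; consequently the process terminates
after at most max_v D(v) rounds. -/
theorem stmt_12 {V : Type*} [Fintype V] (G : SimpleGraph V)
    (π : V → ℕ) (hπ : Function.Injective π)
    (selected decided : ℕ → Set V)
    (hdec0 : decided 0 = ∅)
    (hsel : ∀ r : ℕ, selected r =
      {v : V | v ∉ decided r ∧ ∀ u : V, G.Adj v u → u ∉ decided r → π u < π v})
    (hdec : ∀ r : ℕ, decided (r + 1) =
      decided r ∪ selected r ∪ {u : V | ∃ v ∈ selected r, G.Adj v u})
    (D : V → ℕ)
    (hD : ∀ v : V, IsGreatest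
      {k : ℕ | ∃ l : List V, List.Chain' G.Adj l ∧
        List.Chain' (fun x y => π y < π x) l ∧ l.getLast? = some v ∧ l.length = k}
      (D v)) :
    (∀ v : V, v ∈ decided (D v)) ∧
    (∀ r : ℕ, (∀ v : V, D v ≤ r) → decided r = Set.univ) := by
  have hD1 : ∀ v, 1 ≤ D v := by
    intro v
    exact (hD v).2 ⟨[v], List.isChain_singleton v, List.isChain_singleton v, rfl, rfl⟩
  have key : ∀ n : ℕ, ∀ v : V, D v ≤ n → v ∈ decided n := by
    intro n
    induction n with
    | zero =>
      intro v hv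
      have := hD1 v; omega
    | succ m ih =>
      intro v hv
      by_cases hvd : v ∈ decided m
      · rw [hdec m]; exact Or.inl (Or.inl hvd)
      by_cases hvs : v ∈ selected m
      · rw [hdec m]; exact Or.inl (Or.inr hvs)
      -- v not selected: there is an undecided neighbor u with higher priority
      rw [hsel m] at hvs
      simp only [Set.mem_setOf_eq, not_and, not_forall] at hvs
      obtain ⟨u, hadj, hund, hlt⟩ := hvs hvd
      have hne : π u ≠ π v := fun h => G.ne_of_adj hadj (hπ h).symm
      have hvu : π v < π u := lt_of_le_of_ne (not_lt.mp hlt) (fun h => hne h.symm)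
      -- extend a maximal decreasing path ending at u by v
      obtain ⟨l, hc1, hc2, hlast, hlen⟩ := (hD u).1
      have hlast' : ∀ x ∈ l.getLast?, ∀ y ∈ ([v] : List V).head?, G.Adj x y := by
        intro x hx y hy
        simp only [List.head?] at hy
        rw [hlast] at hx
        simp only [Option.mem_def, Option.some.injEq] at hx hy
        subst hx; subst hy
        exact hadj.symm
      have hlast'' : ∀ x ∈ l.getLast?, ∀ y ∈ ([v] : List V).head?, π y < π x := by
        intro x hx y hy
        simp only [List.head?] at hy
        rw [hlast] at hx
        simp only [Option.mem_def, Option.some.injEq] at hx hy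
        subst hx; subst hy
        exact hvu
      have hmem : D u + 1 ∈ {k : ℕ | ∃ l : List V, List.Chain' G.Adj l ∧
          List.Chain' (fun x y => π y < π x) l ∧ l.getLast? = some v ∧ l.length = k} := by
        refine ⟨l ++ [v], ?_, ?_, ?_, ?_⟩
        · exact List.isChain_append.mpr ⟨hc1, List.isChain_singleton v, hlast'⟩
        · exact List.isChain_append.mpr ⟨hc2, List.isChain_singleton v, hlast''⟩
        · simp
        · simp [hlen]
      have hDu : D u + 1 ≤ D v := (hD v).2 hmem
      have hum : D u ≤ m := by omega
      exact absurd (ih u hum) hund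
  refine ⟨fun v => key (D v) v le_rfl, fun r hr => ?_⟩
  exact Set.eq_univ_of_forall (fun v => key r v (hr v))
end

section
/- Let s be a finite multiset of at least three nonnegative real numbers. Let a be a minimum element of s and b a minimum element of s with a removed (so a ≤ b are the two smallest elements), and let s' be the multiset obtained from s by removing a and b and inserting a + b (one Huffman merge step). Let c ≤ d be the two smallest elements of s'. Then a + b ≤ c + d. Consequently, in the Huffman tree construction process — repeatedly remove the two smallest frequencies and insert their sum — the sequence of created sums is nondecreasing, so once the sum of the current two smallest frequencies is f_m, no element of frequency smaller than f_m is ever created later. -/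
/-- One Huffman merge step: if a ≤ b are the two smallest elements of
a multiset s of at least three nonnegative reals, s' is obtained from s by removing
a and b and inserting a + b, and c ≤ d are the two smallest elements of s', then
a + b ≤ c + d; hence the sequence of created sums in Huffman tree construction is
nondecreasing. -/
theorem stmt_13 (s : Multiset ℝ) (hcard : 3 ≤ Multiset.card s)
    (hpos : ∀ x ∈ s, (0 : ℝ) ≤ x)
    (a b c d : ℝ)
    (ha : a ∈ s ∧ ∀ x ∈ s, a ≤ x)
    (hb : b ∈ s.erase a ∧ ∀ x ∈ s.erase a, b ≤ x)
    (s' : Multiset ℝ) (hs' : s' = (a + b) ::ₘ ((s.erase a).erase b))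
    (hc : c ∈ s' ∧ ∀ x ∈ s', c ≤ x)
    (hd : d ∈ s'.erase c ∧ ∀ x ∈ s'.erase c, d ≤ x) :
    a + b ≤ c + d := by
  obtain ⟨hcm, hcmin⟩ := hc
  obtain ⟨hdm, hdmin⟩ := hd
  have ha0 : (0 : ℝ) ≤ a := hpos a ha.1
  have hb0 : (0 : ℝ) ≤ b := hpos b (Multiset.mem_of_mem_erase hb.1)
  -- every element of s' is nonnegative
  have hpos' : ∀ x ∈ s', (0 : ℝ) ≤ x := by
    intro x hx
    rw [hs', Multiset.mem_cons] at hx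
    rcases hx with h | h
    · subst h; linarith
    · exact hpos x (Multiset.mem_of_mem_erase (Multiset.mem_of_mem_erase h))
  have hc0 : (0 : ℝ) ≤ c := hpos' c hcm
  have hd0 : (0 : ℝ) ≤ d := hpos' d (Multiset.mem_of_mem_erase hdm)
  by_cases hcab : a + b ≤ c
  · linarith
  push_neg at hcab
  -- c ≠ a + b, so c comes from the remaining elements, hence c ≥ a
  have hcne : c ≠ a + b := fun h => by simp [h] at hcab
  have hcmem : c ∈ (s.erase a).erase b := by
    rw [hs', Multiset.mem_cons] at hcm
    tauto
  have hca : a ≤ c := ha.2 c (Multiset.mem_of_mem_erase (Multiset.mem_of_mem_erase hcmem))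
  by_cases hdab : a + b ≤ d
  · linarith
  push_neg at hdab
  have hdne : d ≠ a + b := fun h => by simp [h] at hdab
  -- d also comes from the remaining elements, hence d ≥ b
  have hdmem : d ∈ s.erase a := by
    rw [hs'] at hdm
    rw [Multiset.erase_cons_tail _ (Ne.symm hcne)] at hdm
    rw [Multiset.mem_cons] at hdm
    rcases hdm with h | h
    · exact absurd h hdne
    · exact Multiset.mem_of_mem_erase (Multiset.mem_of_mem_erase h)
  have hdb : b ≤ d := hb.2 d hdmem
  linarith
end
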